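/- Let 0 < x_1 < x_2 < ... < x_n be real numbers and 1 ≤ k < n. Define the censored likelihood L(γ, c) = [Π_{i=n−k+1}^n c γ x_i^{−γ−1}]·(1 − c x_{n−k}^{−γ})^{n−k} on the domain {(γ, c): γ > 0, 0 < c < x_{n−k}^γ}. Then L attains its maximum on this domain uniquely at γ̂ = [k^{−1} Σ_{i=1}^k log(x_{n−i+1}/x_{n−k})]^{−1} and ĉ = (k/n) x_{n−k}^{γ̂}. -/

import Mathlib

open Filter Real Set Topology

noncomputable section

/-- The censored likelihood of the Pareto-tail model, censored at the threshold `x (n-k)`. -/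
def cenLik (x : ℕ → ℝ) (n k : ℕ) (γ c : ℝ) : ℝ :=
  (∏ i ∈ Finset.Icc (n - k + 1) n, c * γ * x i ^ (-γ - 1)) *
    (1 - c * x (n - k) ^ (-γ)) ^ (n - k)

/-- The Hill estimator `γ̂` for an ordered sample. -/
def hillDet (x : ℕ → ℝ) (n k : ℕ) : ℝ :=
  ((k : ℝ)⁻¹ * ∑ i ∈ Finset.Icc 1 k, Real.log (x (n - i + 1) / x (n - k)))⁻¹

/-- The estimator `ĉ = (k/n) x_{n-k}^{γ̂}`. -/
def chatDet (x : ℕ → ℝ) (n k : ℕ) : ℝ := ((k : ℝ) / (n : ℝ)) * x (n - k) ^ hillDet x n k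

private lemma key_lt (a w : ℝ) (ha : 0 < a) (hw : 0 < w) (hne : w ≠ 1) :
    a * Real.log w < a * (w - 1) :=
  mul_lt_mul_of_pos_left (Real.log_lt_sub_one_of_pos hw hne) ha

private lemma key_le (a w : ℝ) (ha : 0 ≤ a) (hw : 0 < w) :
    a * Real.log w ≤ a * (w - 1) :=
  mul_le_mul_of_nonneg_left (Real.log_le_sub_one_of_pos hw) ha

/-- The censored likelihood `L(γ,c)` on `{γ > 0, 0 < c < x_{n-k}^γ}` attains its maximum
uniquely at the Hill estimator `γ̂` and `ĉ = (k/n) x_{n-k}^{γ̂}`. -/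
theorem stmt_7 (n k : ℕ) (hk : 1 ≤ k) (hkn : k < n) (x : ℕ → ℝ)
    (hpos : ∀ i ∈ Finset.Icc 1 n, 0 < x i)
    (hmono : StrictMonoOn x (Set.Icc 1 n)) :
    (0 < hillDet x n k ∧ 0 < chatDet x n k ∧
      chatDet x n k < x (n - k) ^ hillDet x n k) ∧
    ∀ γ c : ℝ, 0 < γ → 0 < c → c < x (n - k) ^ γ →
      (γ, c) ≠ (hillDet x n k, chatDet x n k) →
      cenLik x n k γ c < cenLik x n k (hillDet x n k) (chatDet x n k) := by
  have hn0 : 0 < n := by omega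
  have hn : (0:ℝ) < n := by exact_mod_cast hn0
  have hkR : (0:ℝ) < k := by exact_mod_cast hk
  have hknR : (k:ℝ) < n := by exact_mod_cast hkn
  set T := x (n - k) with hTdef
  have hT : 0 < T := hpos _ (by simp only [Finset.mem_Icc]; omega)
  have hmem : ∀ i ∈ Finset.Icc (n - k + 1) n, 0 < x i ∧ T < x i := by
    intro i hi
    simp only [Finset.mem_Icc] at hi
    have h1 : i ∈ Finset.Icc 1 n := by simp only [Finset.mem_Icc]; omega
    refine ⟨hpos _ h1, ?_⟩
    exact hmono (by simp only [Set.mem_Icc]; omega) (by simpa using Finset.mem_Icc.mp h1)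
      (by omega)
  set S := ∑ i ∈ Finset.Icc (n - k + 1) n, Real.log (x i / T) with hSdef
  have hcard : (Finset.Icc (n - k + 1) n).card = k := by rw [Nat.card_Icc]; omega
  have hSpos : 0 < S := by
    apply Finset.sum_pos
    · intro i hi
      exact Real.log_pos ((one_lt_div hT).mpr (hmem i hi).2)
    · exact Finset.nonempty_Icc.mpr (by omega)
  -- hillDet = k / S
  have hsum_eq : ∑ i ∈ Finset.Icc 1 k, Real.log (x (n - i + 1) / T) = S := by
    rw [hSdef]
    refine Finset.sum_nbij' (fun i => n - i + 1) (fun j => n - j + 1) ?_ ?_ ?_ ?_ ?_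
    · intro a ha; simp only [Finset.mem_Icc] at ha ⊢; omega
    · intro a ha; simp only [Finset.mem_Icc] at ha ⊢; omega
    · intro a ha; simp only [Finset.mem_Icc] at ha; omega
    · intro a ha; simp only [Finset.mem_Icc] at ha; omega
    · intro a _; rfl
  have hHill : hillDet x n k = (k : ℝ) / S := by
    rw [hillDet, ← hTdef, hsum_eq, mul_inv_rev, inv_inv]
    ring
  set γh := hillDet x n k with hγh
  have hγhpos : 0 < γh := by rw [hHill]; positivity
  have hγhS : γh * S = k := by rw [hHill]; field_simp
  set ch := chatDet x n k with hch
  have hchval : ch = ((k:ℝ)/n) * T ^ γh := by rw [hch, chatDet]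
  have hTγh : 0 < T ^ γh := Real.rpow_pos_of_pos hT _
  have hchpos : 0 < ch := by rw [hchval]; positivity
  have hchlt : ch < T ^ γh := by
    rw [hchval]
    calc ((k:ℝ)/n) * T ^ γh < 1 * T ^ γh := by
          apply mul_lt_mul_of_pos_right _ hTγh
          rw [div_lt_one hn]; exact hknR
      _ = T ^ γh := one_mul _
  refine ⟨⟨hγhpos, hchpos, hchlt⟩, ?_⟩
  -- log of the likelihood
  set Lσ := ∑ i ∈ Finset.Icc (n - k + 1) n, Real.log (x i) with hLσ
  have hS' : S = Lσ - (k:ℝ) * Real.log T := by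
    have hlg : ∀ i ∈ Finset.Icc (n - k + 1) n,
        Real.log (x i / T) = Real.log (x i) - Real.log T :=
      fun i hi => Real.log_div (ne_of_gt (hmem i hi).1) (ne_of_gt hT)
    rw [hSdef, Finset.sum_congr rfl hlg, Finset.sum_sub_distrib, Finset.sum_const, hcard,
      nsmul_eq_mul, hLσ]
  have key : ∀ γ c : ℝ, 0 < γ → 0 < c → c < T ^ γ →
      0 < cenLik x n k γ c ∧
      Real.log (cenLik x n k γ c) =
        ((k:ℝ) * Real.log γ - γ * S) +
          ((k:ℝ) * Real.log (c * T ^ (-γ)) + ((n:ℝ) - k) * Real.log (1 - c * T ^ (-γ))) - Lσ := by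
    intro γ c hγ hc hcT
    have hTγ : 0 < T ^ γ := Real.rpow_pos_of_pos hT _
    have hTnγ : 0 < T ^ (-γ) := Real.rpow_pos_of_pos hT _
    have hp1 : c * T ^ (-γ) < 1 := by
      have := mul_lt_mul_of_pos_right hcT hTnγ
      rwa [← Real.rpow_add hT, add_neg_cancel, Real.rpow_zero] at this
    have hq : 0 < 1 - c * T ^ (-γ) := by linarith
    have hfac : ∀ i ∈ Finset.Icc (n - k + 1) n, 0 < c * γ * x i ^ (-γ - 1) := by
      intro i hi
      have := (hmem i hi).1
      positivity
    have hprod : 0 < ∏ i ∈ Finset.Icc (n - k + 1) n, c * γ * x i ^ (-γ - 1) :=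
      Finset.prod_pos hfac
    have hpow : 0 < (1 - c * T ^ (-γ)) ^ (n - k) := pow_pos hq _
    constructor
    · exact mul_pos hprod hpow
    rw [cenLik, ← hTdef, Real.log_mul (ne_of_gt hprod) (ne_of_gt hpow), Real.log_pow,
      Real.log_prod (fun i hi => ne_of_gt (hfac i hi))]
    have hterm : ∀ i ∈ Finset.Icc (n - k + 1) n,
        Real.log (c * γ * x i ^ (-γ - 1)) =
          Real.log c + Real.log γ + (-γ - 1) * Real.log (x i) := by
      intro i hi
      have hxi := (hmem i hi).1
      rw [Real.log_mul (by positivity) (by positivity), Real.log_mul (ne_of_gt hc) (ne_of_gt hγ),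
        Real.log_rpow hxi]
    rw [Finset.sum_congr rfl hterm]
    simp only [Finset.sum_add_distrib, Finset.sum_const, hcard, nsmul_eq_mul,
      ← Finset.mul_sum, ← hLσ]
    have hlogp : Real.log (c * T ^ (-γ)) = Real.log c - γ * Real.log T := by
      rw [Real.log_mul (ne_of_gt hc) (ne_of_gt hTnγ), Real.log_rpow hT]; ring
    have hcast : ((n - k : ℕ) : ℝ) = (n:ℝ) - k := by
      rw [Nat.cast_sub (le_of_lt hkn)]
    rw [hcast, hlogp, hS']
    ring
  -- optimal p value
  have hph : ch * T ^ (-γh) = (k:ℝ) / n := by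
    rw [hchval, mul_assoc, ← Real.rpow_add hT, add_neg_cancel, Real.rpow_zero, mul_one]
  intro γ c hγ hc hcT hne
  obtain ⟨hL1, hlog1⟩ := key γ c hγ hc hcT
  obtain ⟨hL2, hlog2⟩ := key γh ch hγhpos hchpos hchlt
  rw [hph] at hlog2
  set p := c * T ^ (-γ) with hp
  have hTnγ : 0 < T ^ (-γ) := Real.rpow_pos_of_pos hT _
  have hp0 : 0 < p := mul_pos hc hTnγ
  have hp1 : p < 1 := by
    have := mul_lt_mul_of_pos_right hcT hTnγ
    rwa [← Real.rpow_add hT, add_neg_cancel, Real.rpow_zero] at this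
  have hne' : γ ≠ γh ∨ p ≠ (k:ℝ)/n := by
    by_contra h
    push_neg at h
    obtain ⟨h1, h2⟩ := h
    apply hne
    have hcval : c = p * T ^ γ := by
      rw [hp, mul_assoc, ← Real.rpow_add hT, neg_add_cancel, Real.rpow_zero, mul_one]
    rw [Prod.mk.injEq]
    refine ⟨h1, ?_⟩
    rw [hcval, h2, h1, ← hchval]
  -- F part
  have hSne : S ≠ 0 := ne_of_gt hSpos
  have hF : ∀ y : ℝ, 0 < y →
      ((k:ℝ) * Real.log y - y * S ≤ (k:ℝ) * Real.log γh - γh * S) ∧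
      (y ≠ γh → (k:ℝ) * Real.log y - y * S < (k:ℝ) * Real.log γh - γh * S) := by
    intro y hy
    have hw : 0 < y / γh := div_pos hy hγhpos
    have hlogw : Real.log (y / γh) = Real.log y - Real.log γh :=
      Real.log_div (ne_of_gt hy) (ne_of_gt hγhpos)
    have h1 : (k:ℝ) * (y / γh) = S * y := by
      rw [hHill]; field_simp
    have h2 : (k:ℝ) * (y / γh - 1) = S * y - k := by rw [mul_sub, h1, mul_one]
    have h3 : (k:ℝ) * (Real.log y - Real.log γh)
        = (k:ℝ) * Real.log y - (k:ℝ) * Real.log γh := mul_sub _ _ _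
    constructor
    · have := key_le (k:ℝ) (y / γh) (le_of_lt hkR) hw
      rw [hlogw, h3, h2] at this
      linarith [hγhS]
    · intro hney
      have hwne : y / γh ≠ 1 := by
        intro h
        exact hney ((div_eq_one_iff_eq (b := γh) (ne_of_gt hγhpos)).mp h)
      have := key_lt (k:ℝ) (y / γh) hkR hw hwne
      rw [hlogw, h3, h2] at this
      linarith [hγhS]
  -- G part
  have hmR : (0:ℝ) < (n:ℝ) - k := by linarith
  have hph0 : (0:ℝ) < (k:ℝ)/n := by positivity
  have hph1 : (1:ℝ) - (k:ℝ)/n = ((n:ℝ) - k)/n := by field_simp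
  have hph1' : (0:ℝ) < 1 - (k:ℝ)/n := by rw [hph1]; positivity
  have hG : ∀ q : ℝ, 0 < q → q < 1 →
      ((k:ℝ) * Real.log q + ((n:ℝ) - k) * Real.log (1 - q) ≤
        (k:ℝ) * Real.log ((k:ℝ)/n) + ((n:ℝ) - k) * Real.log (1 - (k:ℝ)/n)) ∧
      (q ≠ (k:ℝ)/n → (k:ℝ) * Real.log q + ((n:ℝ) - k) * Real.log (1 - q) <
        (k:ℝ) * Real.log ((k:ℝ)/n) + ((n:ℝ) - k) * Real.log (1 - (k:ℝ)/n)) := by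
    intro q hq0 hq1
    have hq1' : 0 < 1 - q := by linarith
    have hw1 : 0 < q / ((k:ℝ)/n) := div_pos hq0 hph0
    have hw2 : 0 < (1 - q) / (1 - (k:ℝ)/n) := div_pos hq1' hph1'
    have hlw1 : Real.log (q / ((k:ℝ)/n)) = Real.log q - Real.log ((k:ℝ)/n) :=
      Real.log_div (ne_of_gt hq0) (ne_of_gt hph0)
    have hlw2 : Real.log ((1 - q) / (1 - (k:ℝ)/n)) =
        Real.log (1 - q) - Real.log (1 - (k:ℝ)/n) :=
      Real.log_div (ne_of_gt hq1') (ne_of_gt hph1')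
    have e1 : (k:ℝ) * (q / ((k:ℝ)/n)) = n * q := by field_simp
    have e2 : ((n:ℝ) - k) * ((1 - q) / (1 - (k:ℝ)/n)) = n * (1 - q) := by
      rw [hph1]; field_simp
    have e1' : (k:ℝ) * (q / ((k:ℝ)/n) - 1) = n * q - k := by rw [mul_sub, e1, mul_one]
    have e2' : ((n:ℝ) - k) * ((1 - q) / (1 - (k:ℝ)/n) - 1) = n * (1 - q) - ((n:ℝ) - k) := by
      rw [mul_sub, e2, mul_one]
    have m1 : (k:ℝ) * (Real.log q - Real.log ((k:ℝ)/n))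
        = (k:ℝ) * Real.log q - (k:ℝ) * Real.log ((k:ℝ)/n) := mul_sub _ _ _
    have m2 : ((n:ℝ) - k) * (Real.log (1 - q) - Real.log (1 - (k:ℝ)/n))
        = ((n:ℝ) - k) * Real.log (1 - q) - ((n:ℝ) - k) * Real.log (1 - (k:ℝ)/n) := mul_sub _ _ _
    have h2 := key_le ((n:ℝ) - k) ((1 - q) / (1 - (k:ℝ)/n)) (le_of_lt hmR) hw2
    rw [hlw2, m2, e2'] at h2
    constructor
    · have h1 := key_le (k:ℝ) (q / ((k:ℝ)/n)) (le_of_lt hkR) hw1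
      rw [hlw1, m1, e1'] at h1
      linarith
    · intro hneq
      have hwne : q / ((k:ℝ)/n) ≠ 1 := by
        intro h
        exact hneq ((div_eq_one_iff_eq (b := (k:ℝ)/n) (ne_of_gt hph0)).mp h)
      have h1 := key_lt (k:ℝ) (q / ((k:ℝ)/n)) hkR hw1 hwne
      rw [hlw1, m1, e1'] at h1
      linarith
  have hlog_lt : Real.log (cenLik x n k γ c) < Real.log (cenLik x n k γh ch) := by
    rw [hlog1, hlog2]
    rcases hne' with h | h
    · have h1 := (hF γ hγ).2 h
      have h2 := (hG p hp0 hp1).1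
      linarith
    · have h1 := (hF γ hγ).1
      have h2 := (hG p hp0 hp1).2 h
      linarith
  calc cenLik x n k γ c = Real.exp (Real.log (cenLik x n k γ c)) :=
        (Real.exp_log hL1).symm
    _ < Real.exp (Real.log (cenLik x n k γh ch)) := Real.exp_lt_exp.mpr hlog_lt
    _ = cenLik x n k γh ch := Real.exp_log hL2
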